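/- arXiv:2402.19090 — 4 statements merged into one kernel-verified Lean document; each statement's English description precedes it below -/
import Mathlib

section
/- For d∈(0,e^{-2}), with f(d)=2/log(1/d), the Kullback–Leibler divergence KL(f(d),d)=f(d)·log(f(d)/d)+(1−f(d))·log((1−f(d))/(1−d)) satisfies KL(f(d),d) ≥ 1/2. -/
open Real

noncomputable def bernKL (p q : ℝ) : ℝ :=
  p * Real.log (p / q) + (1 - p) * Real.log ((1 - p) / (1 - q))

lemma xlogx_ge (x : ℝ) (hx : 0 < x) : -(Real.exp 1)⁻¹ ≤ x * Real.log x := by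
  have h1 : Real.log ((Real.exp 1 * x)⁻¹) ≤ (Real.exp 1 * x)⁻¹ - 1 :=
    Real.log_le_sub_one_of_pos (by positivity)
  rw [Real.log_inv, Real.log_mul (Real.exp_ne_zero 1) hx.ne', Real.log_exp] at h1
  have h2 : -(Real.exp 1 * x)⁻¹ ≤ Real.log x := by linarith
  have h3 := mul_le_mul_of_nonneg_left h2 hx.le
  have h4 : x * -(Real.exp 1 * x)⁻¹ = -(Real.exp 1)⁻¹ := by
    field_simp
  linarith [h3, h4.symm.le]

theorem KL_f_ge_half (d : ℝ) (hd : d ∈ Set.Ioo 0 (Real.exp (-2))) :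
    (1:ℝ) / 2 ≤ bernKL (2 / Real.log (1 / d)) d := by
  obtain ⟨hd0, hd2⟩ := hd
  have hdlt1 : d < 1 := lt_trans hd2 (by
    have := Real.exp_lt_exp.mpr (show (-2:ℝ) < 0 by norm_num)
    simpa using this)
  have hlogd : Real.log d < -2 := by
    have := Real.log_lt_log hd0 hd2
    rwa [Real.log_exp] at this
  have hL : 2 < Real.log (1 / d) := by
    rw [Real.log_div one_ne_zero hd0.ne', Real.log_one]
    linarith
  set L := Real.log (1 / d) with hLdef
  have hL0 : 0 < L := by linarith
  set t := 2 / L with htdef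
  have ht0 : 0 < t := by positivity
  have ht1 : t < 1 := by rw [htdef, div_lt_one hL0]; linarith
  have hlogd' : Real.log d = -L := by
    rw [hLdef, Real.log_div one_ne_zero hd0.ne', Real.log_one]; ring
  have htL : t * L = 2 := by
    rw [htdef]; field_simp
  have he : 0 < Real.exp 1 := Real.exp_pos 1
  -- bound 1/e
  have hinv : (Real.exp 1)⁻¹ < 3/4 := by
    rw [inv_lt_comm₀ (by positivity) (by norm_num)]
    have := Real.exp_one_gt_d9
    linarith
  have h1 : -(Real.exp 1)⁻¹ ≤ t * Real.log t := xlogx_ge t ht0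
  have h2 : -(Real.exp 1)⁻¹ ≤ (1 - t) * Real.log (1 - t) := xlogx_ge (1 - t) (by linarith)
  have h3 : Real.log (1 - d) ≤ 0 := Real.log_nonpos (by linarith) (by linarith)
  unfold bernKL
  have e1 : Real.log (t / d) = Real.log t + L := by
    rw [Real.log_div ht0.ne' hd0.ne', hlogd']; ring
  have e2 : Real.log ((1 - t) / (1 - d)) = Real.log (1 - t) - Real.log (1 - d) := by
    rw [Real.log_div (by linarith) (by linarith)]
  rw [e1, e2]
  have h4 : (1 - t) * (Real.log (1 - t) - Real.log (1 - d))
      ≥ (1 - t) * Real.log (1 - t) := by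
    have : (1 - t) * Real.log (1 - d) ≤ 0 :=
      mul_nonpos_of_nonneg_of_nonpos (by linarith) h3
    nlinarith
  have h5 : t * (Real.log t + L) = t * Real.log t + 2 := by
    rw [mul_add, htL]
  nlinarith [h1, h2, h4, h5, hinv]
end

section
/- Let X_1,...,X_N be i.i.d. random variables with values in [0,1] and mean d∈(0,1]. Then P((1/N)∑X_n > f(d)) ≤ exp(−N/3), where f(d)=e²d for d≥e^{-2} and f(d)=2/log(1/d) for d<e^{-2}. -/
open MeasureTheory ProbabilityTheory Real Finset

noncomputable def effConsumption (d : ℝ) : ℝ :=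
  if Real.exp (-2) ≤ d then Real.exp 2 * d else 2 / Real.log (1 / d)

private lemma integrable_of_abs_le {Ω : Type*} [MeasureSpace Ω]
    [IsFiniteMeasure (ℙ : Measure Ω)] {f : Ω → ℝ} (hf : Measurable f) (C : ℝ)
    (h : ∀ ω, |f ω| ≤ C) : Integrable f ℙ :=
  ⟨hf.aestronglyMeasurable, HasFiniteIntegral.of_bounded (C := C) (ae_of_all _ h)⟩

private lemma exp_mul_le_of_mem_Icc {t x : ℝ} (hx : x ∈ Set.Icc (0:ℝ) 1) :
    Real.exp (t * x) ≤ 1 + x * (Real.exp t - 1) := by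
  have h := convexOn_exp.2 (Set.mem_univ (0:ℝ)) (Set.mem_univ t)
    (by linarith [hx.2] : (0:ℝ) ≤ 1 - x) hx.1 (by ring)
  simp only [smul_eq_mul, mul_zero, zero_add, Real.exp_zero, mul_one] at h
  rw [mul_comm]
  linarith

theorem consumption_bound
    {Ω : Type*} [MeasureSpace Ω] [IsProbabilityMeasure (ℙ : Measure Ω)]
    (X : ℕ → Ω → ℝ) (hmeas : ∀ n, Measurable (X n))
    (hindep : iIndepFun X ℙ)
    (hident : ∀ n, IdentDistrib (X n) (X 0) ℙ ℙ)
    (hrange : ∀ n ω, X n ω ∈ Set.Icc (0:ℝ) 1)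
    (d : ℝ) (hd : d ∈ Set.Ioc (0:ℝ) 1)
    (hmean : ∀ n, ∫ ω, X n ω ∂ℙ = d)
    (N : ℕ) (hN : 1 ≤ N) :
    ℙ {ω | effConsumption d < (1 / (N:ℝ)) * ∑ n ∈ Finset.range N, X n ω}
      ≤ ENNReal.ofReal (Real.exp (-(N:ℝ) / 3)) := by
  obtain ⟨hd0, hd1⟩ := hd
  set a : ℝ := effConsumption d with ha
  set t : ℝ := if Real.exp (-2) ≤ d then (2:ℝ) else Real.log (1/d) with htdef
  -- basic facts about t
  have ht0 : 0 ≤ t := by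
    rw [htdef]
    split_ifs with h
    · norm_num
    · exact Real.log_nonneg (by rw [le_div_iff₀ hd0]; linarith)
  -- key numeric inequality
  have hkey : d * (Real.exp t - 1) - t * a ≤ -(1/3) := by
    rw [htdef, ha, effConsumption]
    split_ifs with h
    · have h1 : Real.exp (-2) * Real.exp 2 = 1 := by
        rw [← Real.exp_add]; norm_num
      nlinarith [Real.exp_pos (2:ℝ), Real.exp_pos (-2:ℝ)]
    · push_neg at h
      have hlt1 : (1:ℝ) < 1/d := by
        rw [lt_div_iff₀ hd0]
        have := Real.exp_pos (-2:ℝ)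
        nlinarith [Real.exp_lt_exp.2 (show (-2:ℝ) < 0 by norm_num), Real.exp_zero]
      have hlog : 0 < Real.log (1/d) := Real.log_pos hlt1
      have hexp : Real.exp (Real.log (1/d)) = 1/d := Real.exp_log (by positivity)
      rw [hexp]
      have : Real.log (1/d) * (2 / Real.log (1/d)) = 2 := by
        field_simp
      rw [this]
      have : d * (1/d - 1) = 1 - d := by field_simp
      rw [this]
      linarith
  -- mgf bound for each X n
  have hintn : ∀ n, Integrable (fun ω => Real.exp (t * X n ω)) ℙ := by
    intro n
    refine integrable_of_abs_le (((hmeas n).const_mul t).exp) (Real.exp t) fun ω => ?_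
    rw [abs_of_pos (Real.exp_pos _), Real.exp_le_exp]
    nlinarith [(hrange n ω).1, (hrange n ω).2]
  have hXint : ∀ n, Integrable (X n) ℙ := fun n =>
    integrable_of_abs_le (hmeas n) 1 fun ω => by
      rw [abs_le]; exact ⟨by linarith [(hrange n ω).1], (hrange n ω).2⟩
  have hmgf : ∀ n, mgf (X n) ℙ t ≤ Real.exp (d * (Real.exp t - 1)) := by
    intro n
    have h1 : mgf (X n) ℙ t ≤ ∫ ω, (1 + X n ω * (Real.exp t - 1)) ∂ℙ := by
      refine integral_mono (hintn n) ?_ fun ω => exp_mul_le_of_mem_Icc (hrange n ω)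
      exact (integrable_const 1).add ((hXint n).mul_const _)
    have h2 : ∫ ω, (1 + X n ω * (Real.exp t - 1)) ∂ℙ = 1 + d * (Real.exp t - 1) := by
      rw [integral_add (integrable_const 1) ((hXint n).mul_const _),
        integral_mul_const, hmean n]
      simp
    rw [h2] at h1
    exact h1.trans (by linarith [Real.add_one_le_exp (d * (Real.exp t - 1))])
  -- the sum
  set S : Ω → ℝ := ∑ n ∈ Finset.range N, X n with hS
  have hSapp : ∀ ω, S ω = ∑ n ∈ Finset.range N, X n ω := fun ω => by
    rw [hS]; simp [Finset.sum_apply]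
  have hSmeas : Measurable S := by
    have : Measurable fun ω => ∑ n ∈ Finset.range N, X n ω :=
      Finset.measurable_sum _ fun n _ => hmeas n
    convert this using 1
    ext ω; exact hSapp ω
  have hSint : Integrable (fun ω => Real.exp (t * S ω)) ℙ := by
    refine integrable_of_abs_le ((hSmeas.const_mul t).exp) (Real.exp (t * N)) fun ω => ?_
    rw [abs_of_pos (Real.exp_pos _), Real.exp_le_exp]
    have hSub : S ω ≤ N := by
      rw [hSapp]
      calc ∑ n ∈ Finset.range N, X n ω ≤ ∑ _n ∈ Finset.range N, (1:ℝ) :=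
        Finset.sum_le_sum fun n _ => (hrange n ω).2
      _ = N := by simp
    nlinarith
  -- Chernoff
  have hcher : (ℙ {ω | (N:ℝ) * a ≤ S ω}).toReal ≤
      Real.exp (-t * ((N:ℝ) * a)) * mgf S ℙ t :=
    measure_ge_le_exp_mul_mgf ((N:ℝ) * a) ht0 hSint
  have hmgfS : mgf S ℙ t ≤ (Real.exp (d * (Real.exp t - 1))) ^ N := by
    rw [hS, hindep.mgf_sum hmeas]
    calc ∏ n ∈ Finset.range N, mgf (X n) ℙ t
        ≤ ∏ _n ∈ Finset.range N, Real.exp (d * (Real.exp t - 1)) :=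
          Finset.prod_le_prod (fun n _ => mgf_nonneg) (fun n _ => hmgf n)
      _ = (Real.exp (d * (Real.exp t - 1))) ^ N := by
          rw [Finset.prod_const, Finset.card_range]
  have hfinal : Real.exp (-t * ((N:ℝ) * a)) * mgf S ℙ t ≤ Real.exp (-(N:ℝ) / 3) := by
    calc Real.exp (-t * ((N:ℝ) * a)) * mgf S ℙ t
        ≤ Real.exp (-t * ((N:ℝ) * a)) * (Real.exp (d * (Real.exp t - 1))) ^ N := by
          exact mul_le_mul_of_nonneg_left hmgfS (Real.exp_pos _).le
      _ = Real.exp ((N:ℝ) * (d * (Real.exp t - 1) - t * a)) := by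
          rw [← Real.exp_nat_mul, ← Real.exp_add]; ring_nf
      _ ≤ Real.exp (-(N:ℝ) / 3) := by
          rw [Real.exp_le_exp]
          have hN1 : (1:ℝ) ≤ N := by exact_mod_cast hN
          nlinarith
  -- event inclusion
  have hsub : {ω | effConsumption d < (1 / (N:ℝ)) * ∑ n ∈ Finset.range N, X n ω}
      ⊆ {ω | (N:ℝ) * a ≤ S ω} := by
    intro ω hω
    simp only [Set.mem_setOf_eq] at hω ⊢
    have hNpos : (0:ℝ) < N := by positivity
    rw [hSapp]
    rw [← ha] at hω
    have := (mul_lt_mul_of_pos_left hω hNpos)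
    rw [← mul_assoc, mul_one_div_cancel hNpos.ne', one_mul] at this
    linarith
  calc ℙ {ω | effConsumption d < (1 / (N:ℝ)) * ∑ n ∈ Finset.range N, X n ω}
      ≤ ℙ {ω | (N:ℝ) * a ≤ S ω} := measure_mono hsub
    _ = ENNReal.ofReal ((ℙ {ω | (N:ℝ) * a ≤ S ω}).toReal) :=
        (ENNReal.ofReal_toReal (measure_ne_top _ _)).symm
    _ ≤ ENNReal.ofReal (Real.exp (-(N:ℝ) / 3)) :=
        ENNReal.ofReal_le_ofReal (hcher.trans hfinal)
end

section
/- Fix K ≥ 2, gaps 0 < Δ_2 ≤ … ≤ Δ_K, and nonincreasing positive reals d_{(1)} ≥ … ≥ d_{(K)}. Then H₁ := d_{(1)}/Δ_2² + ∑_{k=2}^K d_{(k)}/Δ_k² ≤ log(2K) · H₂, where H₂ := max_{2≤k≤K} (∑_{j=1}^k d_{(j)})/Δ_k². -/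
open Finset Real

lemma harm_aux (K : ℕ) (hK : 2 ≤ K) :
    ∑ k ∈ Finset.Icc 3 K, (1:ℝ)/k ≤ Real.log K - Real.log 2 := by
  induction K with
  | zero => omega
  | succ n ih =>
    rcases Nat.lt_or_ge n 2 with h | h
    · interval_cases n
      · omega
      · norm_num
    · have hn := ih h
      rw [Finset.sum_Icc_succ_top (by omega)]
      have hnpos : (0:ℝ) < n := by exact_mod_cast (show 0 < n by omega)
      have hn1pos : (0:ℝ) < (n:ℝ) + 1 := by positivity
      have key : (1:ℝ)/((n:ℕ)+1 : ℕ) ≤ Real.log ((n:ℕ)+1 : ℕ) - Real.log n := by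
        push_cast
        have h1 : Real.log ((n:ℝ)/((n:ℝ)+1)) ≤ (n:ℝ)/((n:ℝ)+1) - 1 :=
          Real.log_le_sub_one_of_pos (by positivity)
        rw [Real.log_div (ne_of_gt hnpos) (ne_of_gt hn1pos)] at h1
        have h2 : (n:ℝ)/((n:ℝ)+1) - 1 = -(1/((n:ℝ)+1)) := by field_simp; ring
        rw [h2] at h1
        linarith
      linarith

theorem H1_le_log_H2 (K : ℕ) (hK : 2 ≤ K) (Δ d : ℕ → ℝ)
    (hΔpos : 0 < Δ 2)
    (hΔmono : ∀ k ∈ Finset.Icc 2 K, ∀ j ∈ Finset.Icc 2 K, j ≤ k → Δ j ≤ Δ k)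
    (hdpos : ∀ k ∈ Finset.Icc 1 K, 0 < d k)
    (hdmono : ∀ k ∈ Finset.Icc 1 K, ∀ j ∈ Finset.Icc 1 K, j ≤ k → d k ≤ d j) :
    d 1 / (Δ 2) ^ 2 + ∑ k ∈ Finset.Icc 2 K, d k / (Δ k) ^ 2
      ≤ Real.log (2 * K) *
        ((Finset.Icc 2 K).sup' (by simp; omega)
          (fun k => (∑ j ∈ Finset.Icc 1 k, d j) / (Δ k) ^ 2)) := by
  have hne : ((Finset.Icc 2 K)).Nonempty := by
    rw [Finset.nonempty_Icc]; omega
  set H := (Finset.Icc 2 K).sup' (by simp; omega)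
      (fun k => (∑ j ∈ Finset.Icc 1 k, d j) / (Δ k) ^ 2) with hHdef
  have hle : ∀ k ∈ Finset.Icc 2 K, (∑ j ∈ Finset.Icc 1 k, d j) / (Δ k) ^ 2 ≤ H := by
    intro k hk
    exact Finset.le_sup' (fun k => (∑ j ∈ Finset.Icc 1 k, d j) / (Δ k) ^ 2) hk
  have h2mem : (2:ℕ) ∈ Finset.Icc 2 K := by simp; omega
  have hΔkpos : ∀ k ∈ Finset.Icc 2 K, 0 < Δ k := fun k hk =>
    lt_of_lt_of_le hΔpos (hΔmono k hk 2 h2mem (by simp at hk; omega))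
  -- positivity of H
  have hHpos : 0 < H := by
    refine lt_of_lt_of_le ?_ (hle 2 h2mem)
    apply div_pos
    · apply Finset.sum_pos (fun j hj => hdpos j (by simp at hj ⊢; omega))
      simp
    · positivity
  -- split off k = 2
  have hsplit : d 1 / (Δ 2) ^ 2 + ∑ k ∈ Finset.Icc 2 K, d k / (Δ k) ^ 2
      = (∑ j ∈ Finset.Icc 1 2, d j) / (Δ 2) ^ 2 + ∑ k ∈ Finset.Icc 3 K, d k / (Δ k) ^ 2 := by
    have : Finset.Icc 2 K = insert 2 (Finset.Icc 3 K) := by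
      ext x; simp [Finset.mem_Icc, Finset.mem_insert]; omega
    rw [this, Finset.sum_insert (by simp)]
    have : Finset.Icc 1 2 = {1, 2} := rfl
    rw [this]
    rw [Finset.sum_insert (by simp), Finset.sum_singleton]
    ring
  rw [hsplit]
  -- term bound for k in [3, K]
  have hterm : ∀ k ∈ Finset.Icc 3 K, d k / (Δ k) ^ 2 ≤ (1/(k:ℝ)) * H := by
    intro k hk
    simp only [Finset.mem_Icc] at hk
    have hkmem : k ∈ Finset.Icc 2 K := by simp; omega
    have hΔk := hΔkpos k hkmem
    have hkpos : (0:ℝ) < k := by exact_mod_cast (show 0 < k by omega)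
    have hsum : (k:ℝ) * d k ≤ ∑ j ∈ Finset.Icc 1 k, d j := by
      have hcard : (Finset.Icc 1 k).card = k := by
        rw [Nat.card_Icc]; omega
      calc (k:ℝ) * d k = ∑ _j ∈ Finset.Icc 1 k, d k := by
            rw [Finset.sum_const, hcard, nsmul_eq_mul]
        _ ≤ ∑ j ∈ Finset.Icc 1 k, d j := by
            apply Finset.sum_le_sum
            intro j hj
            simp only [Finset.mem_Icc] at hj
            exact hdmono k (by simp; omega) j (by simp; omega) hj.2
    calc d k / (Δ k) ^ 2 ≤ ((∑ j ∈ Finset.Icc 1 k, d j) / k) / (Δ k) ^ 2 := by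
          apply div_le_div_of_nonneg_right ?_ (by positivity)
          rw [le_div_iff₀ hkpos]; linarith
      _ = (1/(k:ℝ)) * ((∑ j ∈ Finset.Icc 1 k, d j) / (Δ k) ^ 2) := by ring
      _ ≤ (1/(k:ℝ)) * H := by
          apply mul_le_mul_of_nonneg_left (hle k hkmem) (by positivity)
  have hsum2 : ∑ k ∈ Finset.Icc 3 K, d k / (Δ k) ^ 2
      ≤ (∑ k ∈ Finset.Icc 3 K, (1/(k:ℝ))) * H := by
    rw [Finset.sum_mul]
    exact Finset.sum_le_sum hterm
  have hharm := harm_aux K hK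
  have hKpos : (0:ℝ) < (K:ℝ) := by exact_mod_cast (show 0 < K by omega)
  have hlog2K : Real.log (2 * (K:ℝ)) = Real.log 2 + Real.log K := by
    rw [Real.log_mul (by norm_num) (ne_of_gt hKpos)]
  have hlog2 : (0.6931471803 : ℝ) < Real.log 2 := Real.log_two_gt_d9
  have hfirst : (∑ j ∈ Finset.Icc 1 2, d j) / (Δ 2) ^ 2 ≤ H := hle 2 h2mem
  have hsum3 : (∑ k ∈ Finset.Icc 3 K, (1/(k:ℝ))) * H ≤ (Real.log K - Real.log 2) * H :=
    mul_le_mul_of_nonneg_right hharm (le_of_lt hHpos)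
  have hfinal : (1 + (Real.log K - Real.log 2)) * H ≤ Real.log (2 * K) * H := by
    apply mul_le_mul_of_nonneg_right _ (le_of_lt hHpos)
    rw [hlog2K]; linarith
  nlinarith [hHpos, hfirst, hsum2, hsum3, hfinal]
end

section
/- For the specific instance with K arms, r_1 = 1/2, r_k = 1/2 − 2^{(k−K−4)/2} for k ≥ 2, and d_1 = 2^{-(K-2)}, d_k = 2^{-(K-k)} for k ≥ 2: the complexity terms satisfy H̃₁ := d_1/(r_1−r_2)² + ∑_{k=2}^K d_k/(r_1−r_k)² = 16K, and H̃₂ := max_{2≤k≤K} (∑_{j=1}^k d_j)/(r_1−r_k)² = 32. -/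
open Finset Real

theorem hard_instance_complexity (K : ℕ) (hK : 2 ≤ K) (r d : ℕ → ℝ)
    (hr1 : r 1 = 1 / 2)
    (hrk : ∀ k ∈ Finset.Icc 2 K, r k = 1 / 2 - (2:ℝ) ^ ((((k:ℝ) - K - 4)) / 2))
    (hd1 : d 1 = (2:ℝ) ^ (-((K:ℝ) - 2)))
    (hdk : ∀ k ∈ Finset.Icc 2 K, d k = (2:ℝ) ^ (-((K:ℝ) - (k:ℝ)))) :
    d 1 / (r 1 - r 2) ^ 2 + ∑ k ∈ Finset.Icc 2 K, d k / (r 1 - r k) ^ 2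
        = 16 * K ∧
    (Finset.Icc 2 K).sup' (by simp; omega)
        (fun k => (∑ j ∈ Finset.Icc 1 k, d j) / (r 1 - r k) ^ 2) = 32 := by
  have h2 : (0:ℝ) < 2 := by norm_num
  -- square of the gap
  have hsq : ∀ k ∈ Finset.Icc 2 K, (r 1 - r k) ^ 2 = (2:ℝ) ^ ((k:ℝ) - K - 4) := by
    intro k hk
    rw [hr1, hrk k hk]
    have : (1:ℝ)/2 - (1/2 - (2:ℝ) ^ (((k:ℝ) - K - 4) / 2)) = (2:ℝ) ^ (((k:ℝ) - K - 4) / 2) := by ring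
    rw [this, sq, ← Real.rpow_add h2]
    ring_nf
  -- each term of first sum equals 16
  have hterm : ∀ k ∈ Finset.Icc 2 K, d k / (r 1 - r k) ^ 2 = 16 := by
    intro k hk
    rw [hdk k hk, hsq k hk, ← Real.rpow_sub h2]
    have : -((K:ℝ) - k) - ((k:ℝ) - K - 4) = 4 := by ring
    rw [this]
    norm_num
  have h2K : (2:ℕ) ∈ Finset.Icc 2 K := by simp [hK]
  have hfirst : d 1 / (r 1 - r 2) ^ 2 = 16 := by
    rw [hd1, hsq 2 h2K, ← Real.rpow_sub h2]
    have : -((K:ℝ) - 2) - ((2:ℕ):ℝ) + (K:ℝ) + 4 = 4 := by push_cast; ring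
    have h4 : -((K:ℝ) - 2) - (((2:ℕ):ℝ) - K - 4) = 4 := by push_cast; ring
    rw [h4]; norm_num
  -- prefix sums
  have hsum : ∀ k, 2 ≤ k → k ≤ K → ∑ j ∈ Finset.Icc 1 k, d j = (2:ℝ) ^ ((k:ℝ) + 1 - K) := by
    intro k hk2 hkK
    induction k with
    | zero => omega
    | succ n ih =>
      rcases Nat.lt_or_ge n 2 with hn | hn
      · interval_cases n
        · omega
        · -- k = 2
          rw [show Finset.Icc 1 2 = {1, 2} by rfl, Finset.sum_insert (by simp),
            Finset.sum_singleton, hd1, hdk 2 (by simp; omega)]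
          rw [show -((K:ℝ) - ((2:ℕ):ℝ)) = -((K:ℝ) - 2) by push_cast; ring]
          rw [← two_mul, show ((1+1:ℕ):ℝ) + 1 - K = -((K:ℝ) - 2) + 1 by push_cast; ring,
            Real.rpow_add_one (by norm_num)]
          ring
      · have hnK : n ≤ K := by omega
        rw [Finset.sum_Icc_succ_top (by omega), ih hn hnK, hdk (n+1) (by simp; omega)]
        have : -((K:ℝ) - ((n+1:ℕ):ℝ)) = (n:ℝ) + 1 - K := by push_cast; ring
        rw [this, ← two_mul, show ((n+1:ℕ):ℝ) + 1 - K = ((n:ℝ) + 1 - K) + 1 by push_cast; ring,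
          Real.rpow_add_one (by norm_num)]
        ring
  have hterm2 : ∀ k ∈ Finset.Icc 2 K, (∑ j ∈ Finset.Icc 1 k, d j) / (r 1 - r k) ^ 2 = 32 := by
    intro k hk
    simp only [Finset.mem_Icc] at hk
    rw [hsum k hk.1 hk.2, hsq k (by simp [hk.1, hk.2]), ← Real.rpow_sub h2]
    have : (k:ℝ) + 1 - K - ((k:ℝ) - K - 4) = 5 := by ring
    rw [this]
    norm_num
  constructor
  · rw [hfirst, Finset.sum_congr rfl hterm, Finset.sum_const, Nat.card_Icc]
    have : (K + 1 - 2 : ℕ) = K - 1 := by omega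
    rw [this, nsmul_eq_mul]
    have hK1 : ((K - 1 : ℕ) : ℝ) = (K:ℝ) - 1 := by
      push_cast [Nat.cast_sub (by omega : 1 ≤ K)]; ring
    rw [hK1]; ring
  · rw [Finset.sup'_congr _ rfl hterm2, Finset.sup'_const]
end
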